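/- Let p be an odd prime and work in the polynomial ring F_p[y_1,...,y_n]. For nonnegative integers e_1,...,e_n define [e_1,...,e_n] = det(y_i^{p^{e_j}})_{1≤i,j≤n}. Then the Vandermonde-type determinant L_n = [0,1,...,n-1] equals, up to sign, the product of all nonzero linear forms c_1 y_1 + ... + c_n y_n with (c_1,...,c_n) ∈ F_p^n ranging over a set of representatives of lines; in particular L_n ≠ 0. -/

import Mathlib

open MvPolynomial Finset

/-- `br p e = det (y_i ^ (p ^ e_j))` in `F_p[y_1,…,y_n]`. -/
noncomputable def br (p : ℕ) {n : ℕ} (e : Fin n → ℕ) : MvPolynomial (Fin n) (ZMod p) :=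
  Matrix.det (Matrix.of fun i j : Fin n => (X i : MvPolynomial (Fin n) (ZMod p)) ^ p ^ e j)

/-- `L_n = [0,1,…,n-1]`. -/
noncomputable def Lpoly (p n : ℕ) : MvPolynomial (Fin n) (ZMod p) :=
  br p (fun j : Fin n => (j : ℕ))

/-- `L_{n,s} = [0,…,ŝ,…,n]`. -/
noncomputable def Ls (p n s : ℕ) : MvPolynomial (Fin n) (ZMod p) :=
  br p (fun j : Fin n => if (j : ℕ) < s then (j : ℕ) else (j : ℕ) + 1)


section aux
variable {p n : ℕ} [hfact : Fact p.Prime]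

noncomputable def nmz (v : Fin n → ZMod p) : Fin n → ZMod p :=
  if h : (Finset.univ.filter (fun i => v i ≠ 0)).Nonempty
  then (v ((Finset.univ.filter (fun i => v i ≠ 0)).min' h))⁻¹ • v
  else 0

lemma nmz_filter_nonempty {v : Fin n → ZMod p} (hv : v ≠ 0) :
    (Finset.univ.filter (fun i => v i ≠ 0)).Nonempty := by
  obtain ⟨i, hi⟩ := Function.ne_iff.mp hv
  exact ⟨i, by simpa using hi⟩

lemma nmz_spec {v : Fin n → ZMod p} (hv : v ≠ 0) :
    ∃ b : ZMod p, b ≠ 0 ∧ nmz v = b⁻¹ • v ∧ v = b • nmz v := by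
  have h := nmz_filter_nonempty hv
  have hmem := Finset.min'_mem _ h
  rw [Finset.mem_filter] at hmem
  refine ⟨v _, hmem.2, ?_, ?_⟩
  · rw [nmz, dif_pos h]
  · rw [nmz, dif_pos h, smul_smul, mul_inv_cancel₀ hmem.2, one_smul]

lemma nmz_smul {v : Fin n → ZMod p} {a : ZMod p} (ha : a ≠ 0) :
    nmz (a • v) = nmz v := by
  by_cases hv : v = 0
  · simp [hv]
  have hset : (Finset.univ.filter (fun i => (a • v) i ≠ 0)) =
      (Finset.univ.filter (fun i => v i ≠ 0)) := by
    ext i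
    simp [Pi.smul_apply, smul_eq_mul, mul_eq_zero, ha]
  have h := nmz_filter_nonempty hv
  rw [nmz, nmz]
  simp only [hset]
  rw [dif_pos h, dif_pos h]
  rw [Pi.smul_apply, smul_eq_mul, smul_smul]
  congr 1
  rw [mul_inv, mul_right_comm, inv_mul_cancel₀ ha, one_mul]

lemma nmz_nmz {v : Fin n → ZMod p} : nmz (nmz v) = nmz v := by
  by_cases hv : v = 0
  · simp [hv, nmz]
  obtain ⟨b, hb, h1, h2⟩ := nmz_spec hv
  conv_lhs => rw [h1]
  rw [nmz_smul (inv_ne_zero hb)]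

lemma nmz_ne_zero {v : Fin n → ZMod p} (hv : v ≠ 0) : nmz v ≠ 0 := by
  obtain ⟨b, hb, h1, h2⟩ := nmz_spec hv
  intro h
  rw [h, smul_zero] at h2
  exact hv h2

end aux
/-- the canonical set of line representatives -/
noncomputable def S0 (p n : ℕ) [Fact p.Prime] : Finset (Fin n → ZMod p) :=
  (Finset.univ.filter (fun v => v ≠ 0)).image nmz

variable {p n : ℕ} [hfact : Fact p.Prime]

lemma mem_S0_iff {c : Fin n → ZMod p} : c ∈ S0 p n ↔ c ≠ 0 ∧ nmz c = c := by
  constructor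
  · intro hc
    simp only [S0, Finset.mem_image, Finset.mem_filter] at hc
    obtain ⟨v, ⟨-, hv⟩, rfl⟩ := hc
    exact ⟨nmz_ne_zero hv, nmz_nmz⟩
  · rintro ⟨hc, hcn⟩
    simp only [S0, Finset.mem_image, Finset.mem_filter]
    exact ⟨c, ⟨Finset.mem_univ _, hc⟩, hcn⟩

lemma repS0 {v : Fin n → ZMod p} (hv : v ≠ 0) :
    ∃! c, c ∈ S0 p n ∧ ∃ lam : (ZMod p)ˣ, v = (lam : ZMod p) • c := by
  obtain ⟨b, hb, h1, h2⟩ := nmz_spec hv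
  refine ⟨nmz v, ⟨mem_S0_iff.mpr ⟨nmz_ne_zero hv, nmz_nmz⟩, ⟨Units.mk0 b hb, h2⟩⟩, ?_⟩
  rintro c ⟨hc, lam, rfl⟩
  rw [nmz_smul (Units.ne_zero lam)]
  exact ((mem_S0_iff.mp hc).2).symm

/-- linear form attached to a coefficient vector -/
noncomputable def lin (c : Fin n → ZMod p) : MvPolynomial (Fin n) (ZMod p) :=
  ∑ i, C (c i) * X i

lemma coeff_lin (c : Fin n → ZMod p) (i : Fin n) :
    coeff (Finsupp.single i 1) (lin c) = c i := by
  rw [lin]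
  simp only [C_mul_X_eq_monomial]
  rw [coeff_sum]
  rw [Finset.sum_eq_single i]
  · simp [coeff_monomial]
  · intro j _ hj
    rw [coeff_monomial, if_neg]
    intro h
    exact hj (by simpa using (Finsupp.single_left_inj one_ne_zero).mp h)
  · simp

lemma lin_ne_zero {c : Fin n → ZMod p} (hc : c ≠ 0) : lin c ≠ 0 := by
  obtain ⟨i, hi⟩ := Function.ne_iff.mp hc
  intro h
  apply hi
  have := coeff_lin c i
  rw [h] at this
  simpa using this.symm

lemma lin_smul (a : ZMod p) (c : Fin n → ZMod p) : lin (a • c) = C a * lin c := by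
  rw [lin, lin, Finset.mul_sum]
  refine Finset.sum_congr rfl fun i _ => ?_
  rw [Pi.smul_apply, smul_eq_mul, map_mul, mul_assoc]

lemma lin_isHomogeneous (c : Fin n → ZMod p) : (lin c).IsHomogeneous 1 :=
  MvPolynomial.IsHomogeneous.sum _ _ _ fun i _ => isHomogeneous_C_mul_X _ _

lemma totalDegree_lin {c : Fin n → ZMod p} (hc : c ≠ 0) : (lin c).totalDegree = 1 :=
  (lin_isHomogeneous c).totalDegree (lin_ne_zero hc)

lemma lin_pow_frob (c : Fin n → ZMod p) (e : ℕ) :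
    (lin c) ^ p ^ e = ∑ i, C (c i) * X i ^ p ^ e := by
  rw [lin, sum_pow_char_pow]
  refine Finset.sum_congr rfl fun i _ => ?_
  rw [mul_pow, ← map_pow, ZMod.pow_card_pow]
section degreelemmas
variable {σ K : Type*} [CommRing K] [IsDomain K]

lemma hc_top_ne {f : MvPolynomial σ K} (hf : f ≠ 0) :
    homogeneousComponent f.totalDegree f ≠ 0 := by
  obtain ⟨d, hd, hsup⟩ := Finset.exists_mem_eq_sup f.support
    (MvPolynomial.support_nonempty.mpr hf) (fun s => s.sum fun _ e => e)
  have hdeg : d.degree = f.totalDegree := by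
    rw [MvPolynomial.totalDegree, hsup]
    simp [Finsupp.degree, Finsupp.sum]
    rfl
  intro h
  have := coeff_homogeneousComponent (n := f.totalDegree) (φ := f) d
  rw [h, if_pos hdeg] at this
  exact (MvPolynomial.mem_support_iff.mp hd) this.symm

lemma hc_top_mul (f g : MvPolynomial σ K) :
    homogeneousComponent (f.totalDegree + g.totalDegree) (f * g)
      = homogeneousComponent f.totalDegree f * homogeneousComponent g.totalDegree g := by
  have hterm : ∀ i j : ℕ, homogeneousComponent (f.totalDegree + g.totalDegree)
      (homogeneousComponent i f * homogeneousComponent j g)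
      = if f.totalDegree + g.totalDegree = i + j
        then homogeneousComponent i f * homogeneousComponent j g else 0 :=
    fun i j => homogeneousComponent_of_mem
      ((homogeneousComponent_isHomogeneous i f).mul (homogeneousComponent_isHomogeneous j g))
  have hfg : f * g = ∑ i ∈ Finset.range (f.totalDegree + 1),
      ∑ j ∈ Finset.range (g.totalDegree + 1),
        homogeneousComponent i f * homogeneousComponent j g := by
    rw [← Finset.sum_mul_sum, sum_homogeneousComponent, sum_homogeneousComponent]
  rw [hfg, map_sum]
  simp only [map_sum, hterm]
  rw [Finset.sum_eq_single f.totalDegree]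
  · rw [Finset.sum_eq_single g.totalDegree]
    · rw [if_pos rfl]
    · intro j hj hne
      have hj' := Finset.mem_range.mp hj
      rw [if_neg (by omega)]
    · intro h; exact absurd (Finset.self_mem_range_succ _) h
  · intro i hi hne
    apply Finset.sum_eq_zero
    intro j hj
    have hi' := Finset.mem_range.mp hi
    have hj' := Finset.mem_range.mp hj
    rw [if_neg (by omega)]
  · intro h; exact absurd (Finset.self_mem_range_succ _) h

lemma totalDegree_mul_eq' {f g : MvPolynomial σ K} (hf : f ≠ 0) (hg : g ≠ 0) :
    (f * g).totalDegree = f.totalDegree + g.totalDegree := by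
  apply le_antisymm (MvPolynomial.totalDegree_mul f g)
  have h3 : homogeneousComponent (f.totalDegree + g.totalDegree) (f * g) ≠ 0 := by
    rw [hc_top_mul]
    exact mul_ne_zero (hc_top_ne hf) (hc_top_ne hg)
  by_contra hlt
  push_neg at hlt
  exact h3 (homogeneousComponent_eq_zero _ _ hlt)

lemma eq_C_of_totalDegree_eq_zero {f : MvPolynomial σ K} (h : f.totalDegree = 0) :
    f = C (coeff 0 f) := by
  have hh : f.IsHomogeneous 0 := by rwa [← MvPolynomial.totalDegree_zero_iff_isHomogeneous]
  have h2 : homogeneousComponent 0 f = f := by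
    rw [homogeneousComponent_of_mem hh, if_pos rfl]
  conv_lhs => rw [← h2]
  rw [homogeneousComponent_zero]

end degreelemmas
lemma prod_primes_dvd'' {R : Type*} [CommRing R] [IsDomain R] {ι : Type*} [DecidableEq ι]
    (s : Finset ι) (f : ι → R) (x : R)
    (hp : ∀ i ∈ s, Prime (f i))
    (ha : ∀ i ∈ s, ∀ j ∈ s, Associated (f i) (f j) → i = j)
    (hd : ∀ i ∈ s, f i ∣ x) : (∏ i ∈ s, f i) ∣ x := by
  induction s using Finset.induction_on with
  | empty => simpa using one_dvd x
  | @insert i s hi ih =>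
    obtain ⟨b, hb⟩ := ih (fun j hj => hp j (Finset.mem_insert_of_mem hj))
      (fun j hj k hk h => ha j (Finset.mem_insert_of_mem hj) k (Finset.mem_insert_of_mem hk) h)
      (fun j hj => hd j (Finset.mem_insert_of_mem hj))
    have hpi := hp i (Finset.mem_insert_self i s)
    have hidvd : f i ∣ x := hd i (Finset.mem_insert_self i s)
    have hnot : ¬ f i ∣ ∏ j ∈ s, f j := by
      intro hdvd
      obtain ⟨j, hj, hdj⟩ := (Prime.dvd_finset_prod_iff hpi f).mp hdvd
      have hassoc := hpi.associated_of_dvd (hp j (Finset.mem_insert_of_mem hj)) hdj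
      exact hi ((ha i (Finset.mem_insert_self i s) j (Finset.mem_insert_of_mem hj) hassoc) ▸ hj)
    rw [hb] at hidvd
    rcases hpi.dvd_or_dvd hidvd with h | h
    · exact absurd h hnot
    · obtain ⟨d, hd'⟩ := h
      rw [Finset.prod_insert hi]
      exact ⟨d, by rw [hb, hd']; ring⟩

section primesec
variable {p n : ℕ} [hfact : Fact p.Prime]

lemma not_isUnit_lin (c : Fin n → ZMod p) : ¬ IsUnit (lin c) := by
  intro h
  have h2 : IsUnit (eval (0 : Fin n → ZMod p) (lin c)) := h.map _
  rw [lin] at h2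
  simp only [map_sum, eval_mul, eval_C, eval_X, Pi.zero_apply, mul_zero,
    Finset.sum_const_zero] at h2
  exact not_isUnit_zero h2

lemma irreducible_lin {c : Fin n → ZMod p} (hc : c ≠ 0) : Irreducible (lin c) := by
  constructor
  · exact not_isUnit_lin c
  · intro f g hfg
    have hf0 : f ≠ 0 := by rintro rfl; exact lin_ne_zero hc (by simp [hfg])
    have hg0 : g ≠ 0 := by rintro rfl; exact lin_ne_zero hc (by simp [hfg])
    have hdeg : f.totalDegree + g.totalDegree = 1 := by
      rw [← totalDegree_mul_eq' hf0 hg0, ← hfg, totalDegree_lin hc]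
    have h01 : f.totalDegree = 0 ∨ g.totalDegree = 0 := by omega
    rcases h01 with h | h
    · left
      rw [eq_C_of_totalDegree_eq_zero h]
      refine IsUnit.map _ (isUnit_iff_ne_zero.mpr ?_)
      intro h0
      exact hf0 (by rw [eq_C_of_totalDegree_eq_zero h, h0, map_zero])
    · right
      rw [eq_C_of_totalDegree_eq_zero h]
      refine IsUnit.map _ (isUnit_iff_ne_zero.mpr ?_)
      intro h0
      exact hg0 (by rw [eq_C_of_totalDegree_eq_zero h, h0, map_zero])

lemma prime_lin {c : Fin n → ZMod p} (hc : c ≠ 0) : Prime (lin c) :=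
  (UniqueFactorizationMonoid.irreducible_iff_prime).mp (irreducible_lin hc)

lemma lin_dvd_L {c : Fin n → ZMod p} (hc : c ≠ 0) : lin c ∣ Lpoly p n := by
  classical
  obtain ⟨k, hk'⟩ := Function.ne_iff.mp hc
  have hk : c k ≠ 0 := by simpa using hk'
  set M : Matrix (Fin n) (Fin n) (MvPolynomial (Fin n) (ZMod p)) :=
    Matrix.of (fun i j : Fin n => (X i : MvPolynomial (Fin n) (ZMod p)) ^ p ^ (j : ℕ)) with hM
  have hL : Lpoly p n = M.det := rfl
  have hrow : (∑ i, (C (c i) : MvPolynomial (Fin n) (ZMod p)) • M i) = fun j : Fin n => (lin c) ^ p ^ (j : ℕ) := by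
    funext j
    rw [Finset.sum_apply, lin_pow_frob]
    refine Finset.sum_congr rfl fun i _ => ?_
    simp [hM, smul_eq_mul]
  have hdet : (M.updateRow k (∑ i, (C (c i) : MvPolynomial (Fin n) (ZMod p)) • M i)).det = C (c k) * M.det := by
    rw [Matrix.det_updateRow_sum, smul_eq_mul]
  have hdvd : lin c ∣ (M.updateRow k (∑ i, (C (c i) : MvPolynomial (Fin n) (ZMod p)) • M i)).det := by
    rw [Matrix.det_apply']
    apply Finset.dvd_sum
    intro σ _
    apply Dvd.dvd.mul_left
    have hmem := Finset.mem_univ (σ⁻¹ k)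
    refine dvd_trans ?_ (Finset.dvd_prod_of_mem
      (fun i => (M.updateRow k (∑ i, (C (c i) : MvPolynomial (Fin n) (ZMod p)) • M i)) (σ i) i) hmem)
    have hentry : (M.updateRow k (∑ i, (C (c i) : MvPolynomial (Fin n) (ZMod p)) • M i)) (σ (σ⁻¹ k)) (σ⁻¹ k)
        = (lin c) ^ p ^ ((σ⁻¹ k : Fin n) : ℕ) := by
      rw [show σ (σ⁻¹ k) = k from σ.apply_symm_apply k, Matrix.updateRow_self]
      exact congrFun hrow _
    show lin c ∣ M.updateRow k (∑ i, (C (c i) : MvPolynomial (Fin n) (ZMod p)) • M i) (σ (σ⁻¹ k)) (σ⁻¹ k)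
    rw [hentry]
    exact dvd_pow_self _ (pow_ne_zero _ hfact.out.ne_zero)
  rw [hdet] at hdvd
  have heq : C ((c k)⁻¹) * (C (c k) * M.det) = M.det := by
    rw [← mul_assoc, ← map_mul, inv_mul_cancel₀ hk, map_one, one_mul]
  rw [hL, ← heq]
  exact hdvd.mul_left _

lemma S0_eq_of_associated {c c' : Fin n → ZMod p} (hc : c ∈ S0 p n) (hc' : c' ∈ S0 p n)
    (h : Associated (lin c) (lin c')) : c = c' := by
  obtain ⟨hc0, hcn⟩ := mem_S0_iff.mp hc
  obtain ⟨hc'0, hc'n⟩ := mem_S0_iff.mp hc'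
  obtain ⟨g, hg⟩ := h.dvd
  have hg0 : g ≠ 0 := by
    rintro rfl
    rw [mul_zero] at hg
    exact lin_ne_zero hc'0 hg
  have hdeg : g.totalDegree = 0 := by
    have h2 := totalDegree_mul_eq' (lin_ne_zero hc0) hg0
    rw [← hg, totalDegree_lin hc0, totalDegree_lin hc'0] at h2
    omega
  have hga : g = C (coeff 0 g) := eq_C_of_totalDegree_eq_zero hdeg
  have hcoeff : ∀ i, c' i = coeff 0 g * c i := by
    intro i
    have h3 := coeff_lin c' i
    rw [hg, hga, mul_comm, coeff_C_mul, coeff_lin] at h3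
    exact h3.symm
  have ha : coeff 0 g ≠ 0 := by
    intro h0
    apply hc'0
    funext i
    rw [Pi.zero_apply, hcoeff i, h0, zero_mul]
  have hsc : c' = coeff 0 g • c := by
    funext i
    rw [Pi.smul_apply, smul_eq_mul, hcoeff i]
  symm
  calc c' = nmz c' := hc'n.symm
  _ = nmz (coeff 0 g • c) := by rw [hsc]
  _ = nmz c := nmz_smul ha
  _ = c := hcn
end primesec
noncomputable def msig (q : ℕ) {m : ℕ} (σ : Equiv.Perm (Fin m)) : Fin m →₀ ℕ :=
  ∑ i, Finsupp.single (σ i) (q ^ (i : ℕ))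

section detsec
variable {p n : ℕ} [hfact : Fact p.Prime]

lemma prod_X_pow_eq_monomial' {ι : Type*} [DecidableEq ι] (s : Finset ι) (τ : ι → Fin n)
    (d : ι → ℕ) :
    (∏ i ∈ s, (X (τ i) : MvPolynomial (Fin n) (ZMod p)) ^ d i)
      = monomial (∑ i ∈ s, Finsupp.single (τ i) (d i)) 1 := by
  induction s using Finset.induction_on with
  | empty => simp
  | @insert i s hi ih =>
    rw [Finset.prod_insert hi, Finset.sum_insert hi, ih, X_pow_eq_monomial, monomial_mul, one_mul]

lemma Lpoly_eq_sum : Lpoly p n = ∑ σ : Equiv.Perm (Fin n),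
    ((Equiv.Perm.sign σ : ℤ) : MvPolynomial (Fin n) (ZMod p)) * monomial (msig p σ) 1 := by
  rw [show Lpoly p n = (Matrix.of (fun i j : Fin n =>
    (X i : MvPolynomial (Fin n) (ZMod p)) ^ p ^ (j : ℕ))).det from rfl, Matrix.det_apply']
  refine Finset.sum_congr rfl fun σ _ => ?_
  congr 1
  exact prod_X_pow_eq_monomial' Finset.univ (fun i => σ i) (fun i => p ^ (i : ℕ))

lemma intCast_eq_C (m : ℤ) :
    ((m : ℤ) : MvPolynomial (Fin n) (ZMod p)) = C ((m : ℤ) : ZMod p) :=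
  (map_intCast (C : ZMod p →+* MvPolynomial (Fin n) (ZMod p)) m).symm

lemma degree_msig (σ : Equiv.Perm (Fin n)) :
    (msig p σ).degree = ∑ j ∈ Finset.range n, p ^ j := by
  rw [msig, Finsupp.degree_eq_weight_one, map_sum]
  rw [← Fin.sum_univ_eq_sum_range (fun j => p ^ j) n]
  refine Finset.sum_congr rfl fun i _ => ?_
  rw [Finsupp.weight_apply, Finsupp.sum_single_index] <;> simp

lemma Lpoly_isHomogeneous :
    (Lpoly p n).IsHomogeneous (∑ j ∈ Finset.range n, p ^ j) := by
  rw [Lpoly_eq_sum]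
  apply MvPolynomial.IsHomogeneous.sum
  intro σ _
  rw [intCast_eq_C]
  exact (isHomogeneous_monomial _ (degree_msig σ)).C_mul _

lemma msig_apply (τ : Equiv.Perm (Fin n)) (j : Fin n) :
    msig p τ (τ j) = p ^ (j : ℕ) := by
  rw [msig, Finsupp.finset_sum_apply]
  rw [Finset.sum_eq_single j]
  · simp [Finsupp.single_apply]
  · intro i _ hij
    rw [Finsupp.single_apply, if_neg (fun hh => hij (τ.injective hh))]
  · simp

lemma msig_inj {σ : Equiv.Perm (Fin n)} (h : msig p σ = msig p 1) : σ = 1 := by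
  ext i
  have h1 := msig_apply (p := p) σ i
  rw [h] at h1
  have h2 : msig p (1 : Equiv.Perm (Fin n)) (σ i) = p ^ ((σ i : Fin n) : ℕ) :=
    msig_apply (p := p) 1 (σ i)
  rw [h1] at h2
  simpa using (Nat.pow_right_injective hfact.out.two_le h2).symm

lemma coeff_Lpoly : coeff (msig p (1 : Equiv.Perm (Fin n))) (Lpoly p n) = 1 := by
  rw [Lpoly_eq_sum, coeff_sum]
  rw [Finset.sum_eq_single (1 : Equiv.Perm (Fin n))]
  · rw [intCast_eq_C, coeff_C_mul, coeff_monomial, if_pos rfl]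
    simp
  · intro σ _ hσ
    rw [intCast_eq_C, coeff_C_mul, coeff_monomial, if_neg (fun h => hσ (msig_inj h)), mul_zero]
  · intro h
    exact absurd (Finset.mem_univ _) h

lemma Lpoly_ne_zero' : Lpoly p n ≠ 0 := by
  intro h
  have h2 := coeff_Lpoly (p := p) (n := n)
  rw [h] at h2
  simp at h2

lemma card_S0 : (S0 p n).card * (p - 1) = p ^ n - 1 := by
  classical
  haveI : NeZero p := ⟨hfact.out.ne_zero⟩
  have hT : (Finset.univ.filter (fun v : Fin n → ZMod p => v ≠ 0))
      = (S0 p n).biUnion (fun c => (Finset.univ : Finset (ZMod p)ˣ).image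
          (fun u : (ZMod p)ˣ => (u : ZMod p) • c)) := by
    ext v
    constructor
    · intro hv
      have hv' : v ≠ 0 := (Finset.mem_filter.mp hv).2
      obtain ⟨b, hb, h1, h2⟩ := nmz_spec hv'
      refine Finset.mem_biUnion.mpr ⟨nmz v, mem_S0_iff.mpr ⟨nmz_ne_zero hv', nmz_nmz⟩, ?_⟩
      exact Finset.mem_image.mpr ⟨Units.mk0 b hb, Finset.mem_univ _, h2.symm⟩
    · intro hv
      obtain ⟨c, hc, hv2⟩ := Finset.mem_biUnion.mp hv
      obtain ⟨u, -, rfl⟩ := Finset.mem_image.mp hv2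
      refine Finset.mem_filter.mpr ⟨Finset.mem_univ _, ?_⟩
      intro h0
      rcases smul_eq_zero.mp h0 with h | h
      · exact Units.ne_zero u h
      · exact (mem_S0_iff.mp hc).1 h
  have hdisj : ∀ c ∈ S0 p n, ∀ c' ∈ S0 p n, c ≠ c' →
      Disjoint ((Finset.univ : Finset (ZMod p)ˣ).image (fun u : (ZMod p)ˣ => (u : ZMod p) • c))
        ((Finset.univ : Finset (ZMod p)ˣ).image (fun u : (ZMod p)ˣ => (u : ZMod p) • c')) := by
    intro c hc c' hc' hne
    rw [Finset.disjoint_left]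
    rintro v hv hv'
    obtain ⟨u, -, rfl⟩ := Finset.mem_image.mp hv
    obtain ⟨u', -, hu'⟩ := Finset.mem_image.mp hv'
    apply hne
    calc c = nmz c := ((mem_S0_iff.mp hc).2).symm
    _ = nmz ((u : ZMod p) • c) := (nmz_smul (Units.ne_zero u)).symm
    _ = nmz ((u' : ZMod p) • c') := by rw [hu']
    _ = nmz c' := nmz_smul (Units.ne_zero u')
    _ = c' := (mem_S0_iff.mp hc').2
  have hcard1 : (Finset.univ.filter (fun v : Fin n → ZMod p => v ≠ 0)).card = p ^ n - 1 := by
    rw [Finset.filter_ne', Finset.card_erase_of_mem (Finset.mem_univ _)]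
    rw [Finset.card_univ, Fintype.card_fun]
    simp [ZMod.card]
  have hcard2 : ∀ c ∈ S0 p n,
      ((Finset.univ : Finset (ZMod p)ˣ).image (fun u : (ZMod p)ˣ => (u : ZMod p) • c)).card = p - 1 := by
    intro c hc
    have hc0 := (mem_S0_iff.mp hc).1
    obtain ⟨i, hi'⟩ := Function.ne_iff.mp hc0
    have hi : c i ≠ 0 := by simpa using hi'
    rw [Finset.card_image_of_injective _ ?_, Finset.card_univ, ZMod.card_units]
    intro u u' huu
    have := congrFun huu i
    simp only [Pi.smul_apply, smul_eq_mul] at this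
    exact Units.ext (mul_right_cancel₀ hi this)
  rw [hT, Finset.card_biUnion hdisj] at hcard1
  rw [← hcard1, Finset.sum_congr rfl hcard2, Finset.sum_const, smul_eq_mul]

lemma card_S0' : (S0 p n).card = ∑ j ∈ Finset.range n, p ^ j := by
  have h := card_S0 (p := p) (n := n)
  have hp2 : 2 ≤ p := hfact.out.two_le
  have h1 : 1 ≤ p ^ n := Nat.one_le_pow _ _ (by omega)
  have hcast : ((S0 p n).card : ℤ) * ((p : ℤ) - 1) = (p : ℤ) ^ n - 1 := by
    have h2 := congrArg (fun m : ℕ => (m : ℤ)) h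
    simp only [Nat.cast_mul, Nat.cast_sub (by omega : 1 ≤ p), Nat.cast_sub h1,
      Nat.cast_pow, Nat.cast_one] at h2
    exact h2
  have hgeom : ((∑ j ∈ Finset.range n, p ^ j : ℕ) : ℤ) * ((p : ℤ) - 1) = (p : ℤ) ^ n - 1 := by
    push_cast
    exact geom_sum_mul (p : ℤ) n
  have heq : ((S0 p n).card : ℤ) = ((∑ j ∈ Finset.range n, p ^ j : ℕ) : ℤ) := by
    have hne : (p : ℤ) - 1 ≠ 0 := by
      have : (2 : ℤ) ≤ (p : ℤ) := by exact_mod_cast hp2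
      omega
    apply mul_right_cancel₀ hne
    rw [hcast, hgeom]
  exact_mod_cast heq

end detsec

/-- The Vandermonde-type determinant `L_n` equals, up to sign, the product of the
nonzero linear forms `c₁y₁ + … + cₙyₙ` with `c` ranging over a set of representatives
of the lines of `F_p^n`; in particular `L_n ≠ 0`. -/
theorem stmt0 (p n : ℕ) (hp : p.Prime) (hodd : Odd p) (hn : 0 < n) :
    (∃ S : Finset (Fin n → ZMod p),
      (∀ v : Fin n → ZMod p, v ≠ 0 →
        ∃! c, c ∈ S ∧ ∃ lam : (ZMod p)ˣ, v = (lam : ZMod p) • c) ∧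
      ∃ ε : ZMod p, (ε = 1 ∨ ε = -1) ∧
        Lpoly p n = C ε * ∏ c ∈ S, ∑ i, C (c i) * X i) ∧
    Lpoly p n ≠ 0 := by
  haveI := Fact.mk hp
  classical
  have hP0dvd : (∏ c ∈ S0 p n, lin c) ∣ Lpoly p n :=
    prod_primes_dvd'' _ _ _ (fun c hc => prime_lin (mem_S0_iff.mp hc).1)
      (fun c hc c' hc' h => S0_eq_of_associated hc hc' h)
      (fun c hc => lin_dvd_L (mem_S0_iff.mp hc).1)
  obtain ⟨g, hg⟩ := hP0dvd
  have hL0 : Lpoly p n ≠ 0 := Lpoly_ne_zero'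
  have hP0 : (∏ c ∈ S0 p n, lin c) ≠ 0 := by
    rw [Finset.prod_ne_zero_iff]
    exact fun c hc => lin_ne_zero (mem_S0_iff.mp hc).1
  have hg0 : g ≠ 0 := by rintro rfl; rw [mul_zero] at hg; exact hL0 hg
  have hP0hom : (∏ c ∈ S0 p n, lin c).IsHomogeneous ((S0 p n).card) := by
    have h4 := MvPolynomial.IsHomogeneous.prod (S0 p n) lin (fun _ => 1)
      (fun c _ => lin_isHomogeneous c)
    simpa using h4
  have htP0 : (∏ c ∈ S0 p n, lin c).totalDegree = (S0 p n).card := hP0hom.totalDegree hP0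
  have htL : (Lpoly p n).totalDegree = ∑ j ∈ Finset.range n, p ^ j :=
    Lpoly_isHomogeneous.totalDegree hL0
  have htg : g.totalDegree = 0 := by
    have h2 := totalDegree_mul_eq' hP0 hg0
    rw [← hg, htL, htP0, card_S0'] at h2
    omega
  have hgC : g = C (coeff 0 g) := eq_C_of_totalDegree_eq_zero htg
  set a := coeff 0 g with ha
  have ha0 : a ≠ 0 := by intro h; apply hg0; rw [hgC, h, map_zero]
  have hS0ne : (S0 p n).Nonempty := by
    rw [← Finset.card_pos, card_S0']
    exact Finset.sum_pos (fun j _ => pow_pos hp.pos j)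
      (Finset.nonempty_range_iff.mpr hn.ne')
  obtain ⟨c0, hc0⟩ := hS0ne
  have hc0n : nmz c0 = c0 := (mem_S0_iff.mp hc0).2
  have hc00 : c0 ≠ 0 := (mem_S0_iff.mp hc0).1
  have hnotmem : a • c0 ∉ (S0 p n).erase c0 := by
    intro hmem
    have h1 : a • c0 ∈ S0 p n := Finset.mem_of_mem_erase hmem
    have h2 : a • c0 ≠ c0 := Finset.ne_of_mem_erase hmem
    apply h2
    calc a • c0 = nmz (a • c0) := ((mem_S0_iff.mp h1).2).symm
    _ = nmz c0 := nmz_smul ha0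
    _ = c0 := hc0n
  refine ⟨⟨insert (a • c0) ((S0 p n).erase c0), ?_, 1, Or.inl rfl, ?_⟩, hL0⟩
  · -- representative property
    intro v hv
    obtain ⟨b, hb, h1, h2⟩ := nmz_spec hv
    by_cases hcase : nmz v = c0
    · refine ⟨a • c0, ⟨Finset.mem_insert_self _ _,
        ⟨Units.mk0 b hb * (Units.mk0 a ha0)⁻¹, ?_⟩⟩, ?_⟩
      · have hco : ((Units.mk0 b hb * (Units.mk0 a ha0)⁻¹ : (ZMod p)ˣ) : ZMod p)
            = b * a⁻¹ := by simp
        rw [hco, smul_smul, mul_assoc, inv_mul_cancel₀ ha0, mul_one, ← hcase]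
        exact h2
      · rintro y ⟨hy, lam, hveq⟩
        rcases Finset.mem_insert.mp hy with h | h
        · exact h
        · exfalso
          have hy2 := Finset.mem_erase.mp h
          have : nmz v = y := by
            rw [hveq, nmz_smul (Units.ne_zero lam)]
            exact (mem_S0_iff.mp hy2.2).2
          exact hy2.1 (this ▸ hcase)
    · refine ⟨nmz v, ⟨Finset.mem_insert_of_mem
        (Finset.mem_erase.mpr ⟨hcase, mem_S0_iff.mpr ⟨nmz_ne_zero hv, nmz_nmz⟩⟩),
        ⟨Units.mk0 b hb, h2⟩⟩, ?_⟩
      rintro y ⟨hy, lam, hveq⟩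
      rcases Finset.mem_insert.mp hy with h | h
      · exfalso
        apply hcase
        rw [hveq, h, nmz_smul (Units.ne_zero lam), nmz_smul ha0, hc0n]
      · have hy2 := Finset.mem_erase.mp h
        have : nmz v = y := by
          rw [hveq, nmz_smul (Units.ne_zero lam)]
          exact (mem_S0_iff.mp hy2.2).2
        exact this.symm
  · -- the product formula
    have h3 : ∏ c ∈ insert (a • c0) ((S0 p n).erase c0), (∑ i, C (c i) * X i)
        = ∏ c ∈ insert (a • c0) ((S0 p n).erase c0), lin c := rfl
    rw [map_one, one_mul, h3, Finset.prod_insert hnotmem, lin_smul, mul_assoc,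
      Finset.mul_prod_erase _ _ hc0, hg, hgC, mul_comm]
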